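/- Every perfect F-restriction semigroup is a monoid: its maximum projection λ is a two-sided identity element. -/
import Mathlib


/-- `e` is a projection: an element of the form `a⁺`. -/
def IsProjection {R : Type*} (plus : R → R) (e : R) : Prop := ∃ a, e = plus a

/-- The natural partial order: `s ≤ t` iff `s = s⁺·t`. -/
def NatLe {R : Type*} (mul : R → R → R) (plus : R → R) (s t : R) : Prop :=
  s = mul (plus s) t

/-- The relation σ: `s σ t` iff `e·s = e·t` for some projection `e`. -/
def SigmaRel {R : Type*} (mul : R → R → R) (plus : R → R) (s t : R) : Prop :=
  ∃ e, IsProjection plus e ∧ mul e s = mul e t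

/-- Every perfect F-restriction semigroup is a monoid: its maximum
projection λ is a two-sided identity element. -/
theorem stmt_7 {R : Type*} [Semigroup R] (plus m : R → R) (lam : R)
    (h1 : ∀ x : R, plus x * x = x)
    (h2 : ∀ x y : R, plus x * plus y = plus y * plus x)
    (h3 : ∀ x y : R, plus (plus x * y) = plus x * plus y)
    (h4 : ∀ x y : R, x * plus y = plus (x * y) * x)
    -- m a is the maximum element of the σ-class of a:
    (hF : ∀ a : R, SigmaRel (· * ·) plus (m a) a ∧
      ∀ t, SigmaRel (· * ·) plus t a → NatLe (· * ·) plus t (m a))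
    -- lam is the maximum projection:
    (hlamProj : IsProjection plus lam)
    (hlamMax : ∀ e, IsProjection plus e → NatLe (· * ·) plus e lam)
    -- perfectness:
    (hperf1 : ∀ s t : R, m s * m t = m (s * t))
    (hperf2 : ∀ s : R, plus (m s) = lam) :
    ∀ s : R, lam * s = s ∧ s * lam = s := by
  -- projections are idempotent
  have idem : ∀ a : R, plus a * plus a = plus a := by
    intro a
    have := h3 a a
    rw [h1] at this
    exact this.symm
  -- plus is idempotent as a map
  have pp : ∀ a : R, plus (plus a) = plus a := by
    intro a
    have hx := h3 a (plus a)
    rw [idem a] at hx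
    calc plus (plus a) = plus a * plus (plus a) := hx
      _ = plus (plus a) * plus a := h2 a (plus a)
      _ = plus a := h1 (plus a)
  -- e * lam = e for projections
  have elam : ∀ a : R, plus a * lam = plus a := by
    intro a
    have := hlamMax (plus a) ⟨a, rfl⟩
    unfold NatLe at this
    rw [pp a] at this
    exact this.symm
  have lame : ∀ a : R, lam * plus a = plus a := by
    intro a
    obtain ⟨c, hc⟩ := hlamProj
    rw [hc, h2 c a, ← hc, elam a]
  -- s ≤ m s
  have smle : ∀ s : R, s = plus s * m s := by
    intro s
    exact (hF s).2 s ⟨plus s, ⟨s, rfl⟩, rfl⟩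
  -- lam * m s = m s
  have lamm : ∀ s : R, lam * m s = m s := by
    intro s
    have := h1 (m s)
    rw [hperf2 s] at this
    exact this
  -- m s * lam = m s
  have mlam : ∀ s : R, m s * lam = m s := by
    intro s
    have := h4 (m s) (m s)
    rw [hperf2 s, hperf1 s s, hperf2 (s * s)] at this
    rw [this, lamm]
  intro s
  constructor
  · calc lam * s = lam * (plus s * m s) := by rw [← smle s]
      _ = lam * plus s * m s := (mul_assoc _ _ _).symm
      _ = plus s * m s := by rw [lame s]
      _ = s := (smle s).symm
  · calc s * lam = plus s * m s * lam := by rw [← smle s]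
      _ = plus s * (m s * lam) := mul_assoc _ _ _
      _ = plus s * m s := by rw [mlam s]
      _ = s := (smle s).symm
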